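/- arXiv:astro-ph/9901024 — 6 statements merged into one kernel-verified Lean document; each statement's English description precedes it below -/
import Mathlib

section
/- Let ξ: ℝ → ℝ be a nonconstant C² solution of ξ'' + β·ξ' - sin(2ξ) = 0 with β > 0. If ξ(s₀) = m·π for some integer m and some s₀ ∈ ℝ, then ξ'(s)² > ξ'(s₀)² for all s < s₀. -/
open Real Set

/-- For a nonconstant C² solution of ξ'' + β·ξ' - sin(2ξ) = 0 with β > 0,
if ξ(s₀) = mπ then ξ'(s)² > ξ'(s₀)² for all s < s₀. -/
theorem stmt_1 (β : ℝ) (hβ : 0 < β) (ξ : ℝ → ℝ) (hξ : ContDiff ℝ 2 ξ)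
    (hode : ∀ s, deriv (deriv ξ) s + β * deriv ξ s - Real.sin (2 * ξ s) = 0)
    (hnc : ¬ ∃ c : ℝ, ∀ s, ξ s = c)
    (m : ℤ) (s₀ : ℝ) (hm : ξ s₀ = m * Real.pi) :
    ∀ s < s₀, (deriv ξ s)^2 > (deriv ξ s₀)^2 := by
  have hd1 : Differentiable ℝ ξ := hξ.differentiable (by norm_num)
  have hξ1 : ContDiff ℝ 1 (deriv ξ) :=
    (contDiff_succ_iff_deriv.mp (show ContDiff ℝ (1+1) ξ by norm_num [hξ])).2.2
  have hd2 : Differentiable ℝ (deriv ξ) := hξ1.differentiable (by norm_num)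
  have hdd : ∀ t, HasDerivAt (deriv ξ) (Real.sin (2 * ξ t) - β * deriv ξ t) t := by
    intro t
    have h := (hd2 t).hasDerivAt
    have : deriv (deriv ξ) t = Real.sin (2 * ξ t) - β * deriv ξ t := by
      have := hode t; linarith
    rwa [this] at h
  set E : ℝ → ℝ := fun t => deriv ξ t * deriv ξ t / 2 - Real.sin (ξ t) * Real.sin (ξ t)
    with hEdef
  have hE : ∀ t, HasDerivAt E (-β * (deriv ξ t)^2) t := by
    intro t
    have h1 := ((hdd t).mul (hdd t)).div_const 2
    have hs : HasDerivAt (fun u => Real.sin (ξ u)) (Real.cos (ξ t) * deriv ξ t) t :=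
      (Real.hasDerivAt_sin (ξ t)).comp t (hd1 t).hasDerivAt
    have h2 := hs.mul hs
    have := h1.sub h2
    refine this.congr_deriv ?_
    rw [Real.sin_two_mul]
    ring
  have hanti : Antitone E := by
    apply antitone_of_deriv_nonpos (fun t => (hE t).differentiableAt)
    intro t
    rw [(hE t).deriv]
    have : (0:ℝ) ≤ β * (deriv ξ t)^2 := by positivity
    linarith
  intro s hs
  by_contra hcon
  push_neg at hcon
  have hsin0 : Real.sin (ξ s₀) = 0 := by rw [hm]; exact Real.sin_int_mul_pi m
  have hEs₀ : E s₀ = (deriv ξ s₀)^2/2 := by simp [hEdef, hsin0]; ring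
  have hle : E s₀ ≤ E s := hanti hs.le
  have hEs : E s = E s₀ := by
    have h1 : (0:ℝ) ≤ Real.sin (ξ s) * Real.sin (ξ s) := mul_self_nonneg _
    have h2 : E s ≤ E s₀ := by rw [hEs₀]; simp only [hEdef]; nlinarith
    linarith
  set t₁ := (s + s₀)/2 with ht₁def
  have ht₁ : t₁ ∈ Ioo s s₀ := ⟨by simp only [ht₁def]; linarith, by simp only [ht₁def]; linarith⟩
  have hconst : ∀ t ∈ Icc s s₀, E t = E s₀ := by
    intro t ht
    have h1 := hanti ht.1
    have h2 := hanti ht.2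
    linarith [hEs]
  have hev : E =ᶠ[nhds t₁] fun _ => E s₀ := by
    filter_upwards [Ioo_mem_nhds ht₁.1 ht₁.2] with t ht
    exact hconst t ⟨ht.1.le, ht.2.le⟩
  have hder0 : deriv E t₁ = 0 := by
    rw [Filter.EventuallyEq.deriv_eq hev]; simp
  have hx0 : deriv ξ t₁ = 0 := by
    have := (hE t₁).deriv
    rw [hder0] at this
    have hb : β * (deriv ξ t₁)^2 = 0 := by linarith
    have := (mul_eq_zero.mp hb).resolve_left (ne_of_gt hβ)
    exact pow_eq_zero_iff (by norm_num) |>.mp this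
  have hEt₁ : E t₁ = E s₀ := hconst t₁ ⟨ht₁.1.le, ht₁.2.le⟩
  have hsint₁ : Real.sin (ξ t₁) = 0 := by
    rw [hEs₀] at hEt₁
    simp only [hEdef, hx0] at hEt₁
    nlinarith [mul_self_nonneg (Real.sin (ξ t₁)), sq_nonneg (deriv ξ s₀)]
  obtain ⟨k, hk⟩ := Real.sin_eq_zero_iff.mp hsint₁
  have hsin2c : Real.sin (2 * ξ t₁) = 0 := by
    rw [← hk, show (2 : ℝ) * ((k:ℝ) * π) = ((2*k : ℤ) : ℝ) * π by push_cast; ring]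
    exact Real.sin_int_mul_pi _
  -- ODE uniqueness: ξ must be the constant solution
  apply hnc
  refine ⟨ξ t₁, fun u => ?_⟩
  set v : ℝ → ℝ × ℝ → ℝ × ℝ := fun _ p => (p.2, Real.sin (2 * p.1) - β * p.2) with hvdef
  have h2lip : LipschitzWith 2 (fun x : ℝ => Real.sin (2 * x)) := by
    apply lipschitzWith_of_nnnorm_deriv_le
    · intro x
      exact (Real.differentiable_sin.comp (differentiable_id.const_mul 2)) x
    · intro x
      have hda : HasDerivAt (fun x : ℝ => Real.sin (2 * x)) (Real.cos (2 * x) * 2) x := by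
        have h0 : HasDerivAt (fun x : ℝ => 2 * x) 2 x := by
          simpa using (hasDerivAt_id x).const_mul 2
        exact (Real.hasDerivAt_sin (2 * x)).comp x h0
      rw [hda.deriv, ← NNReal.coe_le_coe, coe_nnnorm, Real.norm_eq_abs, abs_mul, abs_two]
      have := Real.abs_cos_le_one (2 * x)
      simp only [NNReal.coe_ofNat]
      linarith
  have hblip : LipschitzWith ‖β‖₊ (fun x : ℝ => β * x) := by
    refine LipschitzWith.of_dist_le_mul fun x y => ?_
    simp [Real.dist_eq, ← mul_sub, abs_mul]
  set K : NNReal := 3 + ‖β‖₊ with hK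
  have hvlip : ∀ t, LipschitzWith K (v t) := by
    intro t
    have hfst : LipschitzWith K (fun p : ℝ × ℝ => p.2) := by
      apply LipschitzWith.prod_snd.weaken
      rw [hK]
      calc (1:NNReal) ≤ 3 := by norm_num
        _ ≤ 3 + ‖β‖₊ := le_self_add
    have hsnd : LipschitzWith K (fun p : ℝ × ℝ => Real.sin (2 * p.1) - β * p.2) := by
      apply ((h2lip.comp LipschitzWith.prod_fst).sub (hblip.comp LipschitzWith.prod_snd)).weaken
      rw [hK, mul_one, mul_one]
      exact add_le_add (by norm_num) le_rfl
    have := hfst.prodMk hsnd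
    simpa [max_self] using this
  set F : ℝ → ℝ × ℝ := fun t => (ξ t, deriv ξ t) with hFdef
  set G : ℝ → ℝ × ℝ := fun _ => (ξ t₁, 0) with hGdef
  have hF' : ∀ t, HasDerivAt F (v t (F t)) t := fun t => (hd1 t).hasDerivAt.prodMk (hdd t)
  have hG' : ∀ t, HasDerivAt G (v t (G t)) t := by
    intro t
    have : v t (G t) = (0, 0) := by
      simp [hvdef, hGdef, hsin2c]
    rw [this]
    exact hasDerivAt_const t _
  have heq : F t₁ = G t₁ := by
    simp [hFdef, hGdef, hx0]
  set a := min u t₁ - 1 with ha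
  set b := max u t₁ + 1 with hb
  have ht₁m : t₁ ∈ Ioo a b :=
    ⟨by simp only [ha]; linarith [min_le_right u t₁], by simp only [hb]; linarith [le_max_right u t₁]⟩
  have hum : u ∈ Ioo a b :=
    ⟨by simp only [ha]; linarith [min_le_left u t₁], by simp only [hb]; linarith [le_max_left u t₁]⟩
  have huniq := ODE_solution_unique_of_mem_Ioo
    (fun t _ => (hvlip t).lipschitzOnWith (s := univ)) ht₁m
    (fun t _ => ⟨hF' t, mem_univ _⟩) (fun t _ => ⟨hG' t, mem_univ _⟩) heq
  have := huniq hum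
  simpa [hFdef, hGdef] using congrArg Prod.fst this
end

section
/- Let ξ: ℝ → ℝ be a nonconstant C² solution of ξ'' + β·ξ' - sin(2ξ) = 0 with β > 0, and suppose ξ(s₀) = m·π and ξ'(s₀) ≠ 0 for some integer m. Then ξ(s) tends monotonically to +∞ or to -∞ as s → -∞ (the sign matching the sign of ξ'(s₀)). -/
open Real Filter

lemma aux_pos (β : ℝ) (hβ : 0 < β) (ξ : ℝ → ℝ) (hξ : ContDiff ℝ 2 ξ)
    (hode : ∀ s, deriv (deriv ξ) s + β * deriv ξ s - Real.sin (2 * ξ s) = 0)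
    (m : ℤ) (s₀ : ℝ) (hm : ξ s₀ = m * Real.pi) (ha : 0 < deriv ξ s₀) :
    MonotoneOn ξ (Set.Iic s₀) ∧ Tendsto ξ atBot atBot := by
  have hd1 : Differentiable ℝ ξ := hξ.differentiable (by norm_num)
  have hd2 : Differentiable ℝ (deriv ξ) := by
    have h2 : ContDiff ℝ ((1:ℕ∞)+1) ξ := by norm_num; exact hξ
    exact ((contDiff_succ_iff_deriv.mp h2).2.2).differentiable (by simp)
  set a := deriv ξ s₀ with haa
  set E : ℝ → ℝ := fun s => deriv ξ s * deriv ξ s / 2 - Real.sin (ξ s) * Real.sin (ξ s) with hE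
  have hEderiv : ∀ s, HasDerivAt E (-β * deriv ξ s ^ 2) s := by
    intro s
    have h1 : HasDerivAt ξ (deriv ξ s) s := (hd1 s).hasDerivAt
    have h2 : HasDerivAt (deriv ξ) (deriv (deriv ξ) s) s := (hd2 s).hasDerivAt
    have hsin : HasDerivAt (fun s => Real.sin (ξ s)) (Real.cos (ξ s) * deriv ξ s) s :=
      (Real.hasDerivAt_sin _).comp s h1
    have H := ((h2.mul h2).div_const 2).sub (hsin.mul hsin)
    refine H.congr_deriv (Eq.symm ?_)
    have h := hode s
    rw [Real.sin_two_mul] at h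
    linear_combination (-deriv ξ s : ℝ) * h
  have hEanti : Antitone E := by
    apply antitone_of_deriv_nonpos
    · exact fun s => (hEderiv s).differentiableAt
    · intro s
      rw [(hEderiv s).deriv]
      nlinarith [sq_nonneg (deriv ξ s)]
  have hsin0 : Real.sin (ξ s₀) = 0 := by rw [hm]; exact Real.sin_int_mul_pi m
  have hsq : ∀ s ≤ s₀, a * a ≤ deriv ξ s * deriv ξ s := by
    intro s hs
    have h := hEanti hs
    simp only [hE, hsin0] at h
    nlinarith [sq_nonneg (Real.sin (ξ s))]
  have hposall : ∀ s ≤ s₀, a ≤ deriv ξ s := by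
    intro s hs
    have hne : 0 < deriv ξ s := by
      rcases lt_trichotomy (deriv ξ s) 0 with h | h | h
      · exfalso
        have hcont : ContinuousOn (deriv ξ) (Set.Icc s s₀) := hd2.continuous.continuousOn
        have h0 : (0:ℝ) ∈ Set.Icc (deriv ξ s) (deriv ξ s₀) := ⟨h.le, ha.le⟩
        obtain ⟨t, ht, ht0⟩ := intermediate_value_Icc hs hcont h0
        have := hsq t ht.2
        rw [ht0] at this
        nlinarith
      · exfalso; have := hsq s hs; rw [h] at this; nlinarith
      · exact h
    nlinarith [hsq s hs]
  constructor
  · apply monotoneOn_of_deriv_nonneg (convex_Iic s₀) hd1.continuous.continuousOn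
      (hd1.differentiableOn)
    intro x hx
    rw [interior_Iic] at hx
    have := hposall x (le_of_lt hx)
    linarith
  · have hlin : ∀ s ≤ s₀, ξ s ≤ ξ s₀ + a * (s - s₀) := by
      intro s hs
      set g : ℝ → ℝ := fun s => ξ s - a * s with hg
      have hgd : ∀ x, HasDerivAt g (deriv ξ x - a) x := by
        intro x
        have hax : HasDerivAt (fun y => a * y) a x := by
          simpa using (hasDerivAt_id x).const_mul a
        exact ((hd1 x).hasDerivAt).sub hax
      have hgdiff : Differentiable ℝ g := fun x => (hgd x).differentiableAt
      have hmono : MonotoneOn g (Set.Iic s₀) := by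
        apply monotoneOn_of_deriv_nonneg (convex_Iic s₀)
          hgdiff.continuous.continuousOn hgdiff.differentiableOn
        intro x hx
        rw [interior_Iic] at hx
        show 0 ≤ deriv g x
        rw [(hgd x).deriv]
        have := hposall x hx.le
        linarith
      have := hmono (Set.mem_Iic.mpr hs) (Set.mem_Iic.mpr le_rfl) hs
      simp only [hg] at this
      linarith
    have hev : ξ ≤ᶠ[atBot] fun s => ξ s₀ + a * (s - s₀) := by
      filter_upwards [eventually_le_atBot s₀] with s hs using hlin s hs
    refine tendsto_atBot_mono' atBot hev ?_
    have h1 : Tendsto (fun s : ℝ => a * (s - s₀)) atBot atBot := by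
      apply Tendsto.const_mul_atBot ha
      simpa [sub_eq_add_neg] using tendsto_atBot_add_const_right atBot (-s₀) (tendsto_id (α := ℝ))
    exact tendsto_atBot_add_const_left _ _ h1

/-- For a nonconstant C² solution of ξ'' + β·ξ' - sin(2ξ) = 0 with β > 0,
if ξ(s₀) = mπ and ξ'(s₀) ≠ 0, then ξ tends monotonically to +∞ or -∞ as
s → -∞, the sign matching the sign of ξ'(s₀). -/
theorem stmt_2 (β : ℝ) (hβ : 0 < β) (ξ : ℝ → ℝ) (hξ : ContDiff ℝ 2 ξ)
    (hode : ∀ s, deriv (deriv ξ) s + β * deriv ξ s - Real.sin (2 * ξ s) = 0)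
    (hnc : ¬ ∃ c : ℝ, ∀ s, ξ s = c)
    (m : ℤ) (s₀ : ℝ) (hm : ξ s₀ = m * Real.pi) (ha : deriv ξ s₀ ≠ 0) :
    (0 < deriv ξ s₀ → MonotoneOn ξ (Set.Iic s₀) ∧ Tendsto ξ atBot atBot) ∧
    (deriv ξ s₀ < 0 → AntitoneOn ξ (Set.Iic s₀) ∧ Tendsto ξ atBot atTop) := by
  constructor
  · intro hpos
    exact aux_pos β hβ ξ hξ hode m s₀ hm hpos
  · intro hneg
    set η : ℝ → ℝ := fun s => -ξ s with hη
    have hdη : deriv η = fun s => -deriv ξ s := by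
      funext s; exact deriv.neg
    have hη2 : ContDiff ℝ 2 η := hξ.neg
    have hodeη : ∀ s, deriv (deriv η) s + β * deriv η s - Real.sin (2 * η s) = 0 := by
      intro s
      rw [hdη]
      have : deriv (fun s => -deriv ξ s) s = -deriv (deriv ξ) s := deriv.neg
      rw [this]
      have hsin : Real.sin (2 * η s) = -Real.sin (2 * ξ s) := by
        simp [hη, mul_neg, Real.sin_neg]
      rw [hsin]
      have h := hode s
      show -deriv (deriv ξ) s + β * (-deriv ξ s) - -Real.sin (2 * ξ s) = 0
      linarith
    have hmη : η s₀ = (-m : ℤ) * Real.pi := by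
      simp [hη, hm]
    have haη : 0 < deriv η s₀ := by
      rw [hdη]; simpa using hneg
    obtain ⟨h1, h2⟩ := aux_pos β hβ η hη2 hodeη (-m) s₀ hmη haη
    constructor
    · intro x hx y hy hxy
      have := h1 hx hy hxy
      simp only [hη] at this
      linarith
    · have : Tendsto (fun s => -η s) atBot atTop := tendsto_neg_atBot_atTop.comp h2
      simpa [hη] using this
end

section
/- Let ξ: ℝ → ℝ be a C² solution of ξ'' + β·ξ' - sin(2ξ) = 0 with β > 0 such that ξ(s) → m·π and ξ'(s) → 0 as s → -∞ for some integer m. Then ξ(s) never attains the values (m-1)·π or (m+1)·π for any s ∈ ℝ; in particular there is no such solution connecting m·π at s = -∞ to (m±1)·π at s = +∞. -/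
open Real Filter

/-- A C² solution of ξ'' + β·ξ' - sin(2ξ) = 0 with β > 0 satisfying
ξ(s) → mπ and ξ'(s) → 0 as s → -∞ never attains the values (m-1)π or (m+1)π:
nonexistence of static winding solutions. -/
theorem stmt_4 (β : ℝ) (hβ : 0 < β) (ξ : ℝ → ℝ) (hξ : ContDiff ℝ 2 ξ)
    (hode : ∀ s, deriv (deriv ξ) s + β * deriv ξ s - Real.sin (2 * ξ s) = 0)
    (m : ℤ)
    (hlim : Tendsto ξ atBot (nhds (m * Real.pi)))
    (hlim' : Tendsto (deriv ξ) atBot (nhds 0)) :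
    ∀ s : ℝ, ξ s ≠ (m - 1) * Real.pi ∧ ξ s ≠ (m + 1) * Real.pi := by
  have hdiff : Differentiable ℝ ξ := hξ.differentiable (by norm_num)
  have hξ2 : ContDiff ℝ ((1 : ℕ∞) + 1) ξ := by exact_mod_cast hξ
  have hξ1 : ContDiff ℝ 1 (deriv ξ) := (contDiff_succ_iff_deriv.mp hξ2).2.2
  have hd1 : ∀ s, HasDerivAt ξ (deriv ξ s) s := fun s => (hdiff s).hasDerivAt
  have hdiff' : Differentiable ℝ (deriv ξ) := hξ1.differentiable one_ne_zero
  have hd2 : ∀ s, HasDerivAt (deriv ξ) (deriv (deriv ξ) s) s := fun s => (hdiff' s).hasDerivAt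
  set E : ℝ → ℝ := fun s => (deriv ξ s) ^ 2 / 2 - (Real.sin (ξ s)) ^ 2 with hEdef
  have hE : ∀ s, HasDerivAt E (-β * (deriv ξ s) ^ 2) s := by
    intro s
    have h1 : HasDerivAt (fun s => (deriv ξ s) ^ 2 / 2)
        ((2 * deriv ξ s ^ 1 * deriv (deriv ξ) s) / 2) s := ((hd2 s).pow 2).div_const 2
    have h2 : HasDerivAt (fun s => Real.sin (ξ s)) (Real.cos (ξ s) * deriv ξ s) s :=
      (Real.hasDerivAt_sin (ξ s)).comp s (hd1 s)
    have h3 : HasDerivAt (fun s => (Real.sin (ξ s)) ^ 2)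
        (2 * Real.sin (ξ s) ^ 1 * (Real.cos (ξ s) * deriv ξ s)) s := h2.pow 2
    have h4 := h1.sub h3
    refine h4.congr_deriv ?_
    have hode' := hode s
    rw [Real.sin_two_mul] at hode'
    linear_combination (deriv ξ s : ℝ) * hode' 
  have hEderiv : ∀ s, deriv E s = -β * (deriv ξ s) ^ 2 := fun s => (hE s).deriv
  have hEdiff : Differentiable ℝ E := fun s => (hE s).differentiableAt
  have hEtend : Tendsto E atBot (nhds 0) := by
    have h1 : Tendsto (fun s => (deriv ξ s) ^ 2 / 2) atBot (nhds 0) := by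
      have := (hlim'.pow 2).div_const 2
      simpa using this
    have h2 : Tendsto (fun s => (Real.sin (ξ s)) ^ 2) atBot (nhds 0) := by
      have hs : Tendsto (fun s => Real.sin (ξ s)) atBot (nhds (Real.sin (m * Real.pi))) :=
        (Real.continuous_sin.tendsto _).comp hlim
      rw [Real.sin_int_mul_pi] at hs
      simpa using hs.pow 2
    simpa using h1.sub h2
  have hanti : Antitone E := by
    apply antitone_of_deriv_nonpos hEdiff
    intro s
    rw [hEderiv]
    nlinarith [sq_nonneg (deriv ξ s)]
  have hEle : ∀ s, E s ≤ 0 := by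
    intro s
    refine ge_of_tendsto hEtend ?_
    filter_upwards [eventually_le_atBot s] with t ht
    exact hanti ht
  have key : ∀ (s₀ : ℝ) (k : ℤ), ξ s₀ = (k : ℝ) * Real.pi → ξ s₀ = (m : ℝ) * Real.pi := by
    intro s₀ k hk
    have hEs₀ : E s₀ = 0 := by
      have h1 : E s₀ = (deriv ξ s₀) ^ 2 / 2 := by
        simp only [hEdef]
        rw [hk, Real.sin_int_mul_pi]; ring
      exact le_antisymm (hEle s₀) (by rw [h1]; positivity)
    have hE0 : ∀ t ≤ s₀, E t = 0 := fun t ht =>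
      le_antisymm (hEle t) (hEs₀ ▸ hanti ht)
    have hderiv0 : ∀ t, t < s₀ → deriv ξ t = 0 := by
      intro t ht
      have hloc : E =ᶠ[nhds t] fun _ => (0 : ℝ) := by
        filter_upwards [Iio_mem_nhds ht] with x hx
        exact hE0 x (le_of_lt hx)
      have hz : deriv E t = 0 := by
        rw [Filter.EventuallyEq.deriv_eq hloc]; simp
      rw [hEderiv] at hz
      have hsq : deriv ξ t ^ 2 = 0 :=
        (mul_eq_zero.mp (by linarith : β * deriv ξ t ^ 2 = 0)).resolve_left (ne_of_gt hβ)
      exact pow_eq_zero_iff (two_ne_zero).elim |>.mp hsq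
    have hconst : ∀ a b : ℝ, a ≤ b → b < s₀ → ξ a = ξ b := by
      intro a b hab hb
      have hc : ∀ x ∈ Set.Icc a b, ξ x = ξ a := by
        apply constant_of_derivWithin_zero hdiff.differentiableOn
        intro x hx
        have hab' : a < b := lt_of_le_of_lt hx.1 hx.2
        rw [(hdiff x).derivWithin ((uniqueDiffOn_Icc hab').uniqueDiffWithinAt
          (Set.Ico_subset_Icc_self hx))]
        exact hderiv0 x (lt_trans hx.2 hb)
      exact (hc b (Set.right_mem_Icc.mpr hab)).symm
    have hval : ξ (s₀ - 1) = (m : ℝ) * Real.pi := by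
      have ht : Tendsto ξ atBot (nhds (ξ (s₀ - 1))) := by
        refine Tendsto.congr' ?_ tendsto_const_nhds
        filter_upwards [eventually_le_atBot (s₀ - 1)] with t htle
        exact (hconst t (s₀ - 1) htle (by linarith)).symm
      exact tendsto_nhds_unique ht hlim
    have hall : ∀ t, t < s₀ → ξ t = (m : ℝ) * Real.pi := by
      intro t ht
      rcases le_or_gt t (s₀ - 1) with h | h
      · rw [hconst t (s₀ - 1) h (by linarith), hval]
      · rw [← hconst (s₀ - 1) t h.le ht, hval]
    have hc1 : Tendsto ξ (nhdsWithin s₀ (Set.Iio s₀)) (nhds (ξ s₀)) :=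
      ((hdiff s₀).continuousAt).continuousWithinAt
    have hc2 : Tendsto ξ (nhdsWithin s₀ (Set.Iio s₀)) (nhds ((m : ℝ) * Real.pi)) := by
      refine Tendsto.congr' ?_ tendsto_const_nhds
      filter_upwards [self_mem_nhdsWithin] with t ht
      exact (hall t ht).symm
    exact tendsto_nhds_unique hc1 hc2
  intro s
  constructor
  · intro h
    have h' : ξ s = ((m - 1 : ℤ) : ℝ) * Real.pi := by push_cast; linarith
    have hm := key s (m - 1) h'
    rw [h'] at hm
    push_cast at hm
    nlinarith [Real.pi_pos]
  · intro h
    have h' : ξ s = ((m + 1 : ℤ) : ℝ) * Real.pi := by push_cast; linarith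
    have hm := key s (m + 1) h'
    rw [h'] at hm
    push_cast at hm
    nlinarith [Real.pi_pos]
end

section
/- Suppose ξ is analytic near r = 0, solves r²·ξ'' + 2r·ξ' - (k(k+1)/2)·sin(2ξ) = 0 for a positive integer k, and ξ(0) = (2m+1)·π/2 for some integer m (so cos(2ξ(0)) = -1). Then ξ is constant on a neighborhood of 0. -/
open Real Filter Topology

private lemma analyticAt_deriv'' {f : ℝ → ℝ} {x : ℝ} (h : AnalyticAt ℝ f x) :
    AnalyticAt ℝ (deriv f) x :=
  (AnalyticOnNhd.deriv (fun _ hy => hy : AnalyticOnNhd ℝ f {y | AnalyticAt ℝ f y})) x h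

private lemma tendsto_sin_div_self : Tendsto (fun x : ℝ => Real.sin x / x) (𝓝[≠] (0:ℝ)) (𝓝 1) := by
  have h := hasDerivAt_iff_tendsto_slope.mp (Real.hasDerivAt_sin 0)
  rw [Real.cos_zero] at h
  refine h.congr' ?_
  filter_upwards [self_mem_nhdsWithin] with x hx
  simp [slope_def_field, div_eq_mul_inv]

/-- If ξ is analytic near 0, solves the static texture equation near 0, and
ξ(0) = (2m+1)π/2 for some integer m, then ξ is constant near 0. -/
theorem stmt_7 (k : ℕ) (hk : 0 < k) (ξ : ℝ → ℝ) (hξ : AnalyticAt ℝ ξ 0)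
    (hode : ∀ᶠ r in nhds (0 : ℝ),
      r^2 * deriv (deriv ξ) r + 2 * r * deriv ξ r
        - ((k : ℝ) * (k + 1) / 2) * Real.sin (2 * ξ r) = 0)
    (m : ℤ) (h0 : ξ 0 = (2 * m + 1) * Real.pi / 2) :
    ∀ᶠ r in nhds (0 : ℝ), ξ r = ξ 0 := by
  set c₀ : ℝ := (k : ℝ) * (k + 1) / 2 with hc₀
  have hga : AnalyticAt ℝ (fun r => ξ r - ξ 0) 0 := hξ.sub analyticAt_const
  rcases eq_or_ne (analyticOrderAt (fun r => ξ r - ξ 0) 0) ⊤ with htop | hne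
  · filter_upwards [analyticOrderAt_eq_top.mp htop] with r hr
    linarith [hr]
  · obtain ⟨n, hn⟩ := WithTop.ne_top_iff_exists.mp hne
    obtain ⟨h, hh, hh0, hev⟩ := hga.analyticOrderAt_eq_natCast.mp hn.symm
    -- n ≠ 0
    have hn0 : n ≠ 0 := by
      intro h0n
      subst h0n
      have := hev.self_of_nhds
      simp [smul_eq_mul] at this
      exact hh0 (by linarith [this])
    obtain ⟨p, rfl⟩ := Nat.exists_eq_succ_of_ne_zero hn0
    exfalso
    -- basic eventualities
    have E1 : ∀ᶠ r in 𝓝 (0:ℝ), ξ r - ξ 0 = r ^ (p + 1) * h r := by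
      filter_upwards [hev] with r hr
      simpa [smul_eq_mul] using hr
    have E1' : ξ =ᶠ[𝓝 (0:ℝ)] fun r => ξ 0 + r ^ (p + 1) * h r := by
      filter_upwards [E1] with r hr
      linarith [hr]
    have E2 : ∀ᶠ r in 𝓝 (0:ℝ), AnalyticAt ℝ h r := hh.eventually_analyticAt
    have E3 : ∀ᶠ r in 𝓝 (0:ℝ), AnalyticAt ℝ ξ r := hξ.eventually_analyticAt
    -- first derivative of ξ
    have D1' : ∀ᶠ r in 𝓝 (0:ℝ),
        deriv ξ r = ((p:ℝ) + 1) * r ^ p * h r + r ^ (p + 1) * deriv h r := by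
      filter_upwards [E1'.deriv, E2] with r h1 h2
      rw [h1]
      have hd : HasDerivAt (fun r : ℝ => ξ 0 + r ^ (p + 1) * h r)
          ((((p + 1 : ℕ)) : ℝ) * r ^ (p + 1 - 1) * h r + r ^ (p + 1) * deriv h r) r :=
        ((hasDerivAt_pow (p + 1) r).mul h2.differentiableAt.hasDerivAt).const_add (ξ 0)
      rw [hd.deriv]
      push_cast
      ring_nf
    -- w and its properties
    set w : ℝ → ℝ := fun r => ((p:ℝ) + 1) * h r + r * deriv h r with hwdef
    have hw : AnalyticAt ℝ w 0 :=
      (analyticAt_const.mul hh).add (analyticAt_id.mul (analyticAt_deriv'' hh))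
    have EW : ∀ᶠ r in 𝓝 (0:ℝ), AnalyticAt ℝ w r := hw.eventually_analyticAt
    -- u = r^2 * deriv ξ
    set u : ℝ → ℝ := fun r => r ^ 2 * deriv ξ r with hudef
    have U1 : u =ᶠ[𝓝 (0:ℝ)] fun r => r ^ (p + 2) * w r := by
      filter_upwards [D1'] with r hd
      simp only [hudef, hwdef]
      rw [hd]
      ring
    have D2' : ∀ᶠ r in 𝓝 (0:ℝ),
        deriv u r = ((p:ℝ) + 2) * r ^ (p + 1) * w r + r ^ (p + 2) * deriv w r := by
      filter_upwards [U1.deriv, EW] with r h1 h2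
      rw [h1]
      have hd : HasDerivAt (fun r : ℝ => r ^ (p + 2) * w r)
          ((((p + 2 : ℕ)) : ℝ) * r ^ (p + 2 - 1) * w r + r ^ (p + 2) * deriv w r) r :=
        (hasDerivAt_pow (p + 2) r).mul h2.differentiableAt.hasDerivAt
      rw [hd.deriv]
      push_cast
      ring_nf
    have D3 : ∀ᶠ r in 𝓝 (0:ℝ),
        deriv u r = 2 * r * deriv ξ r + r ^ 2 * deriv (deriv ξ) r := by
      filter_upwards [E3] with r h3
      have hdξ : AnalyticAt ℝ (deriv ξ) r := analyticAt_deriv'' h3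
      have hd : HasDerivAt (fun r : ℝ => r ^ 2 * deriv ξ r)
          ((((2 : ℕ)) : ℝ) * r ^ (2 - 1) * deriv ξ r + r ^ 2 * deriv (deriv ξ) r) r :=
        (hasDerivAt_pow 2 r).mul hdξ.differentiableAt.hasDerivAt
      rw [hudef, hd.deriv]
      push_cast
      ring_nf
    -- sin identity
    have S1 : ∀ᶠ r in 𝓝 (0:ℝ),
        Real.sin (2 * ξ r) = - Real.sin (2 * (r ^ (p + 1) * h r)) := by
      filter_upwards [E1] with r hr
      have : 2 * ξ r = 2 * (r ^ (p + 1) * h r) + Real.pi + (m : ℝ) * (2 * Real.pi) := by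
        have : ξ r = (r ^ (p + 1) * h r) + ξ 0 := by linarith [hr]
        rw [this, h0]
        push_cast
        ring
      rw [this, Real.sin_add_int_mul_two_pi, Real.sin_add_pi]
    -- key identity
    have E : ∀ᶠ r in 𝓝 (0:ℝ),
        ((p:ℝ) + 2) * r ^ (p + 1) * w r + r ^ (p + 2) * deriv w r
          + c₀ * Real.sin (2 * (r ^ (p + 1) * h r)) = 0 := by
      filter_upwards [hode, D2', D3, S1] with r ho h2 h3 hs
      rw [hs] at ho
      linarith [h2, h3, ho]
    -- divide by r^(p+1) on the punctured neighborhood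
    set Φ : ℝ → ℝ := fun r => ((p:ℝ) + 2) * w r + r * deriv w r
        + c₀ * (Real.sin (2 * (r ^ (p + 1) * h r)) / r ^ (p + 1)) with hΦdef
    have Z : ∀ᶠ r in 𝓝[≠] (0:ℝ), Φ r = 0 := by
      filter_upwards [nhdsWithin_le_nhds E, self_mem_nhdsWithin] with r hE hr
      have hr0 : (r : ℝ) ^ (p + 1) ≠ 0 := pow_ne_zero _ (by exact hr)
      have hφ : Φ r = (((p:ℝ) + 2) * r ^ (p + 1) * w r + r ^ (p + 2) * deriv w r
          + c₀ * Real.sin (2 * (r ^ (p + 1) * h r))) / r ^ (p + 1) := by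
        rw [hΦdef]
        field_simp
        ring
      rw [hφ, hE, zero_div]
    -- limits
    have hwc : ContinuousAt w 0 := hw.continuousAt
    have hwd : ContinuousAt (deriv w) 0 := (analyticAt_deriv'' hw).continuousAt
    have T1 : Tendsto (fun r : ℝ => ((p:ℝ) + 2) * w r + r * deriv w r) (𝓝[≠] (0:ℝ))
        (𝓝 (((p:ℝ) + 2) * w 0)) := by
      have : Tendsto (fun r : ℝ => ((p:ℝ) + 2) * w r + r * deriv w r) (𝓝 (0:ℝ))
          (𝓝 (((p:ℝ) + 2) * w 0 + 0 * deriv w 0)) :=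
        ((tendsto_const_nhds.mul hwc.tendsto).add (tendsto_id.mul hwd.tendsto))
      simpa using this.mono_left nhdsWithin_le_nhds
    -- the sin quotient limit
    have hhc : ContinuousAt h 0 := hh.continuousAt
    have hGlim : Tendsto (fun r : ℝ => 2 * (r ^ (p + 1) * h r)) (𝓝 (0:ℝ)) (𝓝 0) := by
      have hc : ContinuousAt (fun r : ℝ => 2 * (r ^ (p + 1) * h r)) 0 :=
        continuousAt_const.mul (((continuous_pow (p + 1)).continuousAt).mul hhc)
      simpa [zero_pow (Nat.succ_ne_zero p)] using hc.tendsto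
    have hGne : ∀ᶠ r in 𝓝[≠] (0:ℝ), 2 * (r ^ (p + 1) * h r) ≠ 0 := by
      have hne : ∀ᶠ r in 𝓝 (0:ℝ), h r ≠ 0 := hhc.eventually_ne hh0
      filter_upwards [nhdsWithin_le_nhds hne, self_mem_nhdsWithin] with r hr1 hr2
      have : r ^ (p + 1) ≠ 0 := pow_ne_zero _ hr2
      positivity
    have hGmap : Tendsto (fun r : ℝ => 2 * (r ^ (p + 1) * h r)) (𝓝[≠] (0:ℝ)) (𝓝[≠] (0:ℝ)) := by
      rw [tendsto_nhdsWithin_iff]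
      exact ⟨hGlim.mono_left nhdsWithin_le_nhds, hGne⟩
    have T2 : Tendsto (fun r : ℝ => Real.sin (2 * (r ^ (p + 1) * h r)) / r ^ (p + 1))
        (𝓝[≠] (0:ℝ)) (𝓝 (2 * h 0)) := by
      have hcomp : Tendsto (fun r : ℝ =>
          (Real.sin (2 * (r ^ (p + 1) * h r)) / (2 * (r ^ (p + 1) * h r))) * (2 * h r))
          (𝓝[≠] (0:ℝ)) (𝓝 (1 * (2 * h 0))) :=
        (tendsto_sin_div_self.comp hGmap).mul
          ((tendsto_const_nhds.mul hhc.tendsto).mono_left nhdsWithin_le_nhds)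
      rw [one_mul] at hcomp
      refine hcomp.congr' ?_
      filter_upwards [hGne, self_mem_nhdsWithin] with r hr1 hr2
      have hp0 : (r : ℝ) ^ (p + 1) ≠ 0 := pow_ne_zero _ hr2
      have hhr : h r ≠ 0 := fun hz => hr1 (by rw [hz]; ring)
      field_simp
    have T : Tendsto Φ (𝓝[≠] (0:ℝ)) (𝓝 (((p:ℝ) + 2) * w 0 + c₀ * (2 * h 0))) :=
      T1.add (tendsto_const_nhds.mul T2)
    have Tz : Tendsto Φ (𝓝[≠] (0:ℝ)) (𝓝 0) :=
      Tendsto.congr' (Filter.EventuallyEq.symm Z) tendsto_const_nhds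
    have key : ((p:ℝ) + 2) * w 0 + c₀ * (2 * h 0) = 0 := tendsto_nhds_unique T Tz
    have hw0 : w 0 = ((p:ℝ) + 1) * h 0 := by simp [hwdef]
    rw [hw0] at key
    have hkpos : (0:ℝ) < (k : ℝ) * ((k:ℝ) + 1) := by
      have : (1:ℝ) ≤ (k:ℝ) := by exact_mod_cast hk
      nlinarith
    have hppos : (0:ℝ) ≤ (p:ℝ) := Nat.cast_nonneg p
    rw [hc₀] at key
    have hsum : (0:ℝ) < ((p:ℝ) + 2) * ((p:ℝ) + 1) + (k:ℝ) * ((k:ℝ) + 1) := by nlinarith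
    have hzero : h 0 * (((p:ℝ) + 2) * ((p:ℝ) + 1) + (k:ℝ) * ((k:ℝ) + 1)) = 0 := by
      linear_combination key
    rcases mul_eq_zero.mp hzero with hz | hz
    · exact hh0 hz
    · linarith
end

section
/- Every C² solution of ξ'' + β·ξ' - sin(2ξ) = 0 with β > 0 satisfying lim_{s→-∞} ξ(s) = mπ (m ∈ ℤ) and lim_{s→-∞} ξ'(s) = 0 is bounded on all of ℝ: there is a constant 0 < c < π such that ξ(s) ∈ [mπ - c, mπ + c] for all s. -/
open Real Filter

/-- Every C² solution of ξ'' + β·ξ' - sin(2ξ) = 0 with β > 0 satisfying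
ξ → mπ and ξ' → 0 as s → -∞ is bounded: there is 0 < c < π with
ξ(s) ∈ [mπ - c, mπ + c] for all s. -/
theorem stmt_15 (β : ℝ) (hβ : 0 < β) (ξ : ℝ → ℝ) (hξ : ContDiff ℝ 2 ξ)
    (hode : ∀ s, deriv (deriv ξ) s + β * deriv ξ s - Real.sin (2 * ξ s) = 0)
    (m : ℤ)
    (hlim : Tendsto ξ atBot (nhds (m * Real.pi)))
    (hlim' : Tendsto (deriv ξ) atBot (nhds 0)) :
    ∃ c : ℝ, 0 < c ∧ c < Real.pi ∧
      ∀ s, ξ s ∈ Set.Icc (m * Real.pi - c) (m * Real.pi + c) := by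
  have hdξ : Differentiable ℝ ξ := hξ.differentiable (by norm_num)
  have hdξ' : Differentiable ℝ (deriv ξ) := by
    have h2 : ContDiff ℝ ((1 : ℕ∞)+1) ξ := by exact_mod_cast hξ
    exact (contDiff_succ_iff_deriv.mp h2).2.2.differentiable (by simp)
  set E : ℝ → ℝ := fun s => (deriv ξ s)^2 / 2 - Real.sin (ξ s)^2 with hEdef
  have hEeq : ∀ s, E s = (deriv ξ s)^2 / 2 - Real.sin (ξ s)^2 := fun s => rfl
  -- derivative of the energy
  have hE : ∀ s, HasDerivAt E (-β * (deriv ξ s)^2) s := by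
    intro s
    have d1 : HasDerivAt ξ (deriv ξ s) s := (hdξ s).hasDerivAt
    have d2 : HasDerivAt (deriv ξ) (deriv (deriv ξ) s) s := (hdξ' s).hasDerivAt
    have h1 : HasDerivAt (fun t => (deriv ξ t)^2 / 2)
        (deriv ξ s * deriv (deriv ξ) s) s := by
      have := (d2.pow 2).div_const 2
      refine this.congr_deriv ?_
      ring
    have h2 : HasDerivAt (fun t => Real.sin (ξ t)^2)
        (Real.sin (2 * ξ s) * deriv ξ s) s := by
      have hs : HasDerivAt (fun t => Real.sin (ξ t)) (Real.cos (ξ s) * deriv ξ s) s :=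
        (Real.hasDerivAt_sin (ξ s)).comp s d1
      have := hs.pow 2
      refine this.congr_deriv ?_
      rw [Real.sin_two_mul]
      ring
    have h3 := h1.sub h2
    refine h3.congr_deriv ?_
    have h0 := hode s
    have h4 : deriv (deriv ξ) s = Real.sin (2 * ξ s) - β * deriv ξ s := by linarith
    rw [h4]
    ring
  have hanti : Antitone E := by
    apply antitone_of_deriv_nonpos (fun s => (hE s).differentiableAt)
    intro s
    rw [(hE s).deriv]
    nlinarith [sq_nonneg (deriv ξ s)]
  -- E → 0 at -∞
  have hE0 : Tendsto E atBot (nhds 0) := by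
    have h1 : Tendsto (fun s => (deriv ξ s)^2/2) atBot (nhds 0) := by
      have := (hlim'.pow 2).div_const 2
      simpa using this
    have h2 : Tendsto (fun s => Real.sin (ξ s)^2) atBot (nhds 0) := by
      have hs : Tendsto (fun s => Real.sin (ξ s)) atBot (nhds (Real.sin (m*π))) :=
        (Real.continuous_sin.tendsto _).comp hlim
      rw [Real.sin_int_mul_pi] at hs
      simpa using hs.pow 2
    simpa using h1.sub h2
  have hEle : ∀ s, E s ≤ 0 := fun s =>
    ge_of_tendsto hE0 ((eventually_le_atBot s).mono fun t ht => hanti ht)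
  -- if the energy vanishes at s₀ then ξ s₀ = mπ
  have hzero : ∀ s₀, E s₀ = 0 → ξ s₀ = m * π := by
    intro s₀ h0
    have hEz : ∀ t, t ≤ s₀ → E t = 0 := fun t ht =>
      le_antisymm (hEle t) (h0 ▸ hanti ht)
    have hder0 : ∀ t ∈ Set.Iio s₀, deriv ξ t = 0 := by
      intro t ht
      have heq : E =ᶠ[nhds t] fun _ => (0:ℝ) := by
        filter_upwards [Iio_mem_nhds ht] with u hu
        exact hEz u hu.le
      have h1 : deriv E t = 0 := by
        rw [heq.deriv_eq]
        simp
      have h2 := (hE t).deriv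
      have h3 : -β * (deriv ξ t)^2 = 0 := by rw [← h2, h1]
      have h4 : (deriv ξ t)^2 = 0 := by
        by_contra hne
        have h5 := lt_of_le_of_ne (sq_nonneg (deriv ξ t)) (Ne.symm hne)
        nlinarith
      exact (pow_eq_zero_iff two_ne_zero).mp h4
    have hc : ContinuousOn ξ (Set.Iic s₀) := hdξ.continuous.continuousOn
    have hdiff : DifferentiableOn ℝ ξ (interior (Set.Iic s₀)) :=
      hdξ.differentiableOn
    have hmono : MonotoneOn ξ (Set.Iic s₀) := by
      apply monotoneOn_of_deriv_nonneg (convex_Iic s₀) hc hdiff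
      intro t ht
      rw [interior_Iic] at ht
      rw [hder0 t ht]
    have hanti2 : AntitoneOn ξ (Set.Iic s₀) := by
      apply antitoneOn_of_deriv_nonpos (convex_Iic s₀) hc hdiff
      intro t ht
      rw [interior_Iic] at ht
      rw [hder0 t ht]
    have hconst : ∀ a, a ≤ s₀ → ξ a = ξ s₀ := fun a ha =>
      le_antisymm (hmono ha (Set.mem_Iic.mpr le_rfl) ha)
        (hanti2 ha (Set.mem_Iic.mpr le_rfl) ha)
    have htend : Tendsto ξ atBot (nhds (ξ s₀)) := by
      apply Tendsto.congr' _ tendsto_const_nhds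
      filter_upwards [eventually_le_atBot s₀] with a ha
      exact (hconst a ha).symm
    exact tendsto_nhds_unique htend hlim
  -- ξ never reaches mπ ± π
  have hopen : ∀ s, |ξ s - m * π| < π := by
    by_contra hcon
    push_neg at hcon
    obtain ⟨s₁, hs₁⟩ := hcon
    have h2 : ∀ᶠ s in atBot, |ξ s - m*π| < π := by
      have := Metric.tendsto_nhds.mp hlim π Real.pi_pos
      simpa [Real.dist_eq] using this
    obtain ⟨s₂', hs₂'⟩ := eventually_atBot.mp h2
    set s₂ := min s₂' s₁ with hs₂def
    have hle : s₂ ≤ s₁ := min_le_right _ _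
    have hgcont : ContinuousOn (fun s => |ξ s - m*π|) (Set.Icc s₂ s₁) :=
      ((hdξ.continuous.sub continuous_const).abs).continuousOn
    have hmem : π ∈ Set.Icc (|ξ s₂ - m*π|) (|ξ s₁ - m*π|) :=
      ⟨(hs₂' s₂ (min_le_left _ _)).le, hs₁⟩
    obtain ⟨s₀, hs₀mem, hs₀'⟩ := intermediate_value_Icc hle hgcont hmem
    have hs₀ : |ξ s₀ - (m:ℝ)*π| = π := hs₀'
    have hsin0 : Real.sin (ξ s₀) = 0 := by
      rcases abs_eq Real.pi_pos.le |>.mp hs₀ with h | h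
      · have : ξ s₀ = ((m+1 : ℤ) : ℝ) * π := by push_cast; linarith
        rw [this, Real.sin_int_mul_pi]
      · have : ξ s₀ = ((m-1 : ℤ) : ℝ) * π := by push_cast; linarith
        rw [this, Real.sin_int_mul_pi]
    have hE00 : E s₀ = 0 := by
      have := hEle s₀
      rw [hEeq s₀, hsin0] at this ⊢
      nlinarith [sq_nonneg (deriv ξ s₀)]
    have := hzero s₀ hE00
    rw [this] at hs₀
    simp at hs₀
    exact absurd hs₀.symm (ne_of_gt Real.pi_pos)
  by_cases hcase : ∃ s₀, E s₀ < 0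
  · -- energy strictly negative from some time on
    obtain ⟨s₀, hs₀⟩ := hcase
    set δ := -E s₀ with hδdef
    have hδpos : 0 < δ := by linarith
    have hsinlb : ∀ s, s₀ ≤ s → δ ≤ Real.sin (ξ s)^2 := by
      intro s hs
      have h1 : E s ≤ E s₀ := hanti hs
      rw [hEeq s, hEeq s₀] at h1
      rw [hδdef, hEeq s₀]
      linarith [sq_nonneg (deriv ξ s)]
    set ε : ℝ := min (Real.sqrt δ) 1 / 2 with hεdef
    have hsq : 0 < Real.sqrt δ := Real.sqrt_pos.mpr hδpos
    have hεpos : 0 < ε := by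
      have := lt_min hsq one_pos
      positivity
    have hεlt : ε < Real.sqrt δ := by
      have h1 : min (Real.sqrt δ) 1 ≤ Real.sqrt δ := min_le_left _ _
      have h2 : 0 < min (Real.sqrt δ) 1 := lt_min hsq one_pos
      rw [hεdef]
      linarith
    have hεle : ε ≤ 1/2 := by
      have : min (Real.sqrt δ) 1 ≤ 1 := min_le_right _ _
      rw [hεdef]
      linarith
    have hεsq : ε^2 < δ := by
      nlinarith [Real.sq_sqrt hδpos.le]
    -- bound for s ≥ s₀
    have hbound1 : ∀ s, s₀ ≤ s → |ξ s - m*π| ≤ π - ε := by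
      intro s hs
      by_contra hcon
      push_neg at hcon
      have habs : |ξ s - m*π| < π := hopen s
      have hpi : (3:ℝ) < π := Real.pi_gt_three
      -- sin² ξ s = sin² (ξ s - mπ)
      have hsq1 : Real.sin (ξ s)^2 = Real.sin (ξ s - m*π)^2 := by
        have hh := Real.sin_add_int_mul_pi (ξ s - m*π) m
        rw [show ξ s - (m:ℝ)*π + (m:ℝ)*π = ξ s from by ring] at hh
        rw [hh, mul_pow]
        have hone : ((-1:ℝ)^(m:ℤ))^2 = 1 := by
          rw [← zpow_natCast ((-1:ℝ)^(m:ℤ)) 2, ← zpow_mul, mul_comm, zpow_mul]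
          norm_num
        rw [hone, one_mul]
      have hsq2 : Real.sin (ξ s - m*π)^2 = Real.sin |ξ s - m*π| ^2 := by
        rcases abs_cases (ξ s - (m:ℝ)*π) with ⟨h, _⟩ | ⟨h, _⟩
        · rw [h]
        · rw [h, Real.sin_neg]
          ring
      have hsq3 : Real.sin |ξ s - m*π| = Real.sin (π - |ξ s - m*π|) :=
        (Real.sin_pi_sub _).symm
      set y := π - |ξ s - m*π| with hydef
      have hy0 : 0 ≤ y := by rw [hydef]; linarith
      have hyε : y < ε := by rw [hydef]; linarith
      have hsy : Real.sin y ≤ y := Real.sin_le hy0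
      have hsy0 : 0 ≤ Real.sin y := by
        apply Real.sin_nonneg_of_nonneg_of_le_pi hy0
        linarith
      have hlb := hsinlb s hs
      rw [hsq1, hsq2, hsq3] at hlb
      nlinarith
    -- bound for s ≤ s₀
    have h2 : ∀ᶠ s in atBot, |ξ s - m*π| < π/2 := by
      have := Metric.tendsto_nhds.mp hlim (π/2) (by positivity)
      simpa [Real.dist_eq] using this
    obtain ⟨s₂', hs₂'⟩ := eventually_atBot.mp h2
    set s₂ := min s₂' s₀ with hs₂def
    have hle : s₂ ≤ s₀ := min_le_right _ _
    have hgcont : ContinuousOn (fun s => |ξ s - m*π|) (Set.Icc s₂ s₀) :=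
      ((hdξ.continuous.sub continuous_const).abs).continuousOn
    obtain ⟨t, htmem, htmax⟩ := isCompact_Icc.exists_isMaxOn
      (Set.nonempty_Icc.mpr hle) hgcont
    set M := |ξ t - m*π| with hMdef
    have hM : M < π := hopen t
    refine ⟨max (π - ε) (max M (π/2)), ?_, ?_, ?_⟩
    · have : (0:ℝ) < π/2 := by positivity
      have h3 : π/2 ≤ max M (π/2) := le_max_right _ _
      have h4 : max M (π/2) ≤ max (π - ε) (max M (π/2)) := le_max_right _ _
      linarith
    · apply max_lt (by linarith) (max_lt hM (by linarith [Real.pi_pos]))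
    · intro s
      have hbnd : |ξ s - m*π| ≤ max (π - ε) (max M (π/2)) := by
        rcases le_total s₀ s with hcase1 | hcase1
        · exact le_trans (hbound1 s hcase1) (le_max_left _ _)
        · rcases le_total s₂ s with hcase2 | hcase2
          · have := htmax ⟨hcase2, hcase1⟩
            exact le_trans this (le_trans (le_max_left _ _) (le_max_right _ _))
          · have hs2 : s ≤ s₂' := le_trans hcase2 (min_le_left _ _)
            have := (hs₂' s hs2).le
            exact le_trans this (le_trans (le_max_right _ _) (le_max_right _ _))
      rcases abs_le.mp hbnd with ⟨ha, hb⟩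
      exact Set.mem_Icc.mpr ⟨by linarith, by linarith⟩
  · -- the energy is identically zero, hence ξ ≡ mπ
    push_neg at hcase
    have hEz : ∀ s, E s = 0 := fun s => le_antisymm (hEle s) (hcase s)
    have hder : ∀ s, deriv ξ s = 0 := by
      intro s
      have h1 : deriv E s = 0 := by
        have hf : E = fun _ => (0:ℝ) := funext hEz
        rw [hf]
        simp
      have h2 := (hE s).deriv
      have h3 : -β * (deriv ξ s)^2 = 0 := by rw [← h2, h1]
      have h4 : (deriv ξ s)^2 = 0 := by
        by_contra hne
        have h5 := lt_of_le_of_ne (sq_nonneg (deriv ξ s)) (Ne.symm hne)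
        nlinarith
      exact (pow_eq_zero_iff two_ne_zero).mp h4
    have hconst : ∀ s, ξ s = ξ 0 := fun s =>
      is_const_of_deriv_eq_zero hdξ hder s 0
    have hx0 : ξ 0 = m * π := by
      have htend : Tendsto ξ atBot (nhds (ξ 0)) :=
        (tendsto_congr fun s => (hconst s).symm).mp tendsto_const_nhds
      exact tendsto_nhds_unique htend hlim
    refine ⟨π/2, by positivity, by linarith [Real.pi_pos], fun s => ?_⟩
    rw [hconst s, hx0]
    constructor <;> [linarith [Real.pi_pos]; linarith [Real.pi_pos]]
end

section
/- Let ξ: ℝ → ℝ be a nonconstant C² solution of ξ'' + β·ξ' - sin(2ξ) = 0 with β > 0 and ξ(s) → mπ, ξ'(s) → 0 as s → -∞. Then for all s ∈ ℝ, ξ(s) ≠ (m+1)π and ξ(s) ≠ (m-1)π; moreover sin²(ξ(s)) > 0 whenever ξ(s) ≠ mπ on the trajectory after the first time ξ leaves mπ. -/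
open Real Filter Set

/-- A nonconstant C² solution of ξ'' + β·ξ' - sin(2ξ) = 0 with β > 0 and
ξ → mπ, ξ' → 0 as s → -∞ never attains (m+1)π nor (m-1)π; moreover
sin²(ξ(s)) > 0 whenever ξ(s) ≠ mπ. -/
theorem stmt_19 (β : ℝ) (hβ : 0 < β) (ξ : ℝ → ℝ) (hξ : ContDiff ℝ 2 ξ)
    (hode : ∀ s, deriv (deriv ξ) s + β * deriv ξ s - Real.sin (2 * ξ s) = 0)
    (hnc : ¬ ∃ c : ℝ, ∀ s, ξ s = c)
    (m : ℤ)
    (hlim : Tendsto ξ atBot (nhds (m * Real.pi)))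
    (hlim' : Tendsto (deriv ξ) atBot (nhds 0)) :
    (∀ s : ℝ, ξ s ≠ (m + 1) * Real.pi ∧ ξ s ≠ (m - 1) * Real.pi) ∧
    (∀ s : ℝ, ξ s ≠ m * Real.pi → 0 < (Real.sin (ξ s))^2) := by
  -- differentiability facts
  have h11 : ContDiff ℝ ((1:ℕ)+1) ξ := by exact_mod_cast hξ
  have hd1 : ContDiff ℝ 1 (deriv ξ) := (contDiff_succ_iff_deriv.mp (by exact_mod_cast h11)).2.2
  have h01 : ContDiff ℝ ((0:ℕ∞)+1) (deriv ξ) := by norm_num; exact hd1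
  have hcont2 : Continuous (deriv (deriv ξ)) := (contDiff_succ_iff_deriv.mp h01).2.2.continuous
  have hdiff : Differentiable ℝ ξ := hξ.differentiable (by norm_num)
  have hdiff1 : Differentiable ℝ (deriv ξ) := hd1.differentiable (by norm_num)
  have d1 : ∀ s, HasDerivAt ξ (deriv ξ s) s := fun s => (hdiff s).hasDerivAt
  have d2 : ∀ s, HasDerivAt (deriv ξ) (deriv (deriv ξ) s) s := fun s => (hdiff1 s).hasDerivAt
  have hode' : ∀ s, deriv (deriv ξ) s = Real.sin (2 * ξ s) - β * deriv ξ s := by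
    intro s; have := hode s; linarith
  -- energy
  set E : ℝ → ℝ := fun s => (deriv ξ s)^2/2 - (Real.sin (ξ s))^2 with hEdef
  have hE : ∀ s, HasDerivAt E (-(β * (deriv ξ s)^2)) s := by
    intro s
    have h1 : HasDerivAt (fun s => (deriv ξ s)^2/2)
        (2 * deriv ξ s ^ 1 * deriv (deriv ξ) s / 2) s := ((d2 s).pow 2).div_const 2
    have h2 : HasDerivAt (fun s => (Real.sin (ξ s))^2)
        (2 * Real.sin (ξ s) ^ 1 * (Real.cos (ξ s) * deriv ξ s)) s :=
      (((Real.hasDerivAt_sin (ξ s)).comp s (d1 s)).pow 2)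
    have := h1.sub h2
    refine this.congr_deriv ?_
    rw [hode' s, Real.sin_two_mul]
    ring
  -- E is antitone
  have hEanti : Antitone E := by
    apply antitone_of_deriv_nonpos
    · exact fun s => (hE s).differentiableAt
    · intro s; rw [(hE s).deriv]; nlinarith [sq_nonneg (deriv ξ s)]
  -- E → 0 at -∞
  have hE0 : Tendsto E atBot (nhds 0) := by
    have h1 : Tendsto (fun s => (deriv ξ s)^2/2) atBot (nhds 0) := by
      have := (hlim'.pow 2).div_const 2
      simpa using this
    have h2 : Tendsto (fun s => (Real.sin (ξ s))^2) atBot (nhds 0) := by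
      have := ((Real.continuous_sin.tendsto _).comp hlim).pow 2
      simpa [Real.sin_int_mul_pi] using this
    have := h1.sub h2
    simpa using this
  have hEle : ∀ s, E s ≤ 0 := by
    intro s
    refine ge_of_tendsto hE0 ?_
    filter_upwards [eventually_le_atBot s] with t ht
    exact hEanti ht
  -- key lemma: sin (ξ s) ≠ 0 always
  have key : ∀ s₀, Real.sin (ξ s₀) ≠ 0 := by
    intro s₀ hsin
    have hder0 : deriv ξ s₀ = 0 := by
      have h := hEle s₀
      have : (deriv ξ s₀)^2/2 ≤ 0 := by
        simp only [hEdef] at h; rw [hsin] at h; nlinarith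
      nlinarith [sq_nonneg (deriv ξ s₀)]
    -- ODE uniqueness: ξ is constant
    set p := ξ s₀ with hp
    have hsin2p : Real.sin (2 * p) = 0 := by
      rw [Real.sin_two_mul, hsin]; ring
    set v : ℝ → ℝ × ℝ → ℝ × ℝ := fun _ y => (y.2, Real.sin (2*y.1) - β*y.2) with hv
    have hlip : ∀ t : ℝ, LipschitzOnWith (⟨β+2, by positivity⟩ : NNReal) (v t) univ := by
      intro t
      apply LipschitzWith.lipschitzOnWith
      apply LipschitzWith.of_dist_le_mul
      intro p q
      have hS : |Real.sin (2*p.1) - Real.sin (2*q.1)| ≤ 2 * |p.1 - q.1| := by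
        rw [Real.sin_sub_sin]
        have h1 : |Real.sin ((2*p.1 - 2*q.1)/2)| ≤ |p.1 - q.1| := by
          have := Real.abs_sin_le_abs (x := (2*p.1 - 2*q.1)/2)
          have h2 : (2*p.1 - 2*q.1)/2 = p.1 - q.1 := by ring
          rwa [h2] at this ⊢
        have h2 : |Real.cos ((2*p.1 + 2*q.1)/2)| ≤ 1 := Real.abs_cos_le_one _
        rw [abs_mul, abs_mul, abs_two]
        nlinarith [abs_nonneg (Real.sin ((2*p.1 - 2*q.1)/2)),
          abs_nonneg (Real.cos ((2*p.1 + 2*q.1)/2)), abs_nonneg (p.1 - q.1)]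
      rw [Prod.dist_eq, Prod.dist_eq]
      simp only [Real.dist_eq, NNReal.coe_mk]
      have hA : |p.1 - q.1| ≤ max |p.1 - q.1| |p.2 - q.2| := le_max_left _ _
      have hB : |p.2 - q.2| ≤ max |p.1 - q.1| |p.2 - q.2| := le_max_right _ _
      have hC : (0:ℝ) ≤ max |p.1 - q.1| |p.2 - q.2| := le_trans (abs_nonneg _) hA
      have hkey : |(Real.sin (2*p.1) - β*p.2) - (Real.sin (2*q.1) - β*q.2)|
          ≤ 2 * |p.1 - q.1| + β * |p.2 - q.2| := by
        have h3 : (Real.sin (2*p.1) - β*p.2) - (Real.sin (2*q.1) - β*q.2)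
            = (Real.sin (2*p.1) - Real.sin (2*q.1)) + (-(β * (p.2 - q.2))) := by ring
        rw [h3]
        calc |(Real.sin (2*p.1) - Real.sin (2*q.1)) + (-(β * (p.2 - q.2)))|
            ≤ |Real.sin (2*p.1) - Real.sin (2*q.1)| + |(-(β * (p.2 - q.2)))| := abs_add_le _ _
          _ ≤ 2 * |p.1 - q.1| + β * |p.2 - q.2| := by
              rw [abs_neg, abs_mul, abs_of_nonneg hβ.le]; linarith
      show max |p.2 - q.2| |Real.sin (2*p.1) - β*p.2 - (Real.sin (2*q.1) - β*q.2)| ≤ (β+2) * max |p.1 - q.1| |p.2 - q.2|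
      apply max_le
      · nlinarith
      · nlinarith
    set f : ℝ → ℝ × ℝ := fun s => (ξ s, deriv ξ s) with hf
    set g : ℝ → ℝ × ℝ := fun _ => ((p, 0) : ℝ × ℝ) with hg
    have hf' : ∀ t : ℝ, HasDerivAt f (v t (f t)) t := by
      intro t
      have := (d1 t).prodMk (d2 t)
      simp only [hv, hf]
      refine this.congr_deriv ?_
      simp [hode' t]
    have hg' : ∀ t : ℝ, HasDerivAt g (v t (g t)) t := by
      intro t
      simp only [hv, hg]
      exact (hasDerivAt_const t ((p, 0) : ℝ × ℝ)).congr_deriv (by ext <;> simp [hsin2p])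
    have heq : ∀ t : ℝ, f t = g t := by
      intro t
      have hab : t ∈ Icc (min s₀ t - 1) (max s₀ t + 1) := by
        constructor
        · have := min_le_right s₀ t; linarith
        · have := le_max_right s₀ t; linarith
      have hmem : s₀ ∈ Ioo (min s₀ t - 1) (max s₀ t + 1) := by
        constructor
        · have := min_le_left s₀ t; linarith
        · have := le_max_left s₀ t; linarith
      refine ODE_solution_unique_of_mem_Icc (fun t _ => hlip t) hmem ?_ ?_ ?_ ?_ ?_ ?_ ?_ hab
      · exact Continuous.continuousOn (by fun_prop)
      · exact fun t _ => hf' t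
      · exact fun t _ => mem_univ _
      · exact continuousOn_const
      · exact fun t _ => hg' t
      · exact fun t _ => mem_univ _
      · simp [hf, hg, hder0, hp]
    exact hnc ⟨p, fun t => congrArg Prod.fst (heq t)⟩
  have hne : ∀ (s : ℝ) (k : ℤ), ξ s ≠ (k : ℝ) * Real.pi := by
    intro s k hk
    exact key s (by rw [hk]; exact Real.sin_int_mul_pi k)
  refine ⟨fun s => ⟨?_, ?_⟩, fun s _ => ?_⟩
  · have := hne s (m + 1); push_cast at this ⊢; exact this
  · have := hne s (m - 1); push_cast at this ⊢; exact this
  · have := key s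
    positivity
end
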